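/- Empirical-quantile lower confidence bound: let Y_1,…,Y_t be i.i.d. real random variables, let p ∈ (0,1) with Pr(Y_1 ≤ G_p) = p where G_p is the p-quantile of Y_1, let δ ∈ (0,1), and set u_t = √(2p(1−p)·ln(1/δ)/t) + ln(1/δ)/(3t). Assume p − u_t > 0. Then with probability at least 1 − δ, the empirical quantile satisfies q̂_t(p − u_t) ≤ G_p, where q̂_t(α) = inf{x ∈ ℝ : #{s ≤ t : Y_s ≤ x} ≥ α·t}. -/

import Mathlib

open MeasureTheory ProbabilityTheory

/-- Empirical quantile of the samples `y 0, …, y (t-1)` at level `α`: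
`q̂_t(α) = inf {x : #{s ≤ t : y s ≤ x} ≥ α t}`. -/
noncomputable def empQuantile (t : ℕ) (y : ℕ → ℝ) (α : ℝ) : ℝ :=
  sInf {x : ℝ | α * t ≤ (((Finset.range t).filter fun s => y s ≤ x).card : ℝ)}



lemma aux_nonneg {f f' : ℝ → ℝ} (hd : ∀ x, HasDerivAt f (f' x) x)
    (h0 : f 0 = 0) (hf' : ∀ x, 0 ≤ x → 0 ≤ f' x) : ∀ x, 0 ≤ x → 0 ≤ f x := by
  intro x hx
  have hmono : MonotoneOn f (Set.Ici (0:ℝ)) := by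
    apply monotoneOn_of_deriv_nonneg (convex_Ici 0)
    · exact (Differentiable.continuous fun y => (hd y).differentiableAt).continuousOn
    · exact fun y _ => (hd y).differentiableAt.differentiableWithinAt
    · intro y hy
      rw [interior_Ici] at hy
      rw [(hd y).deriv]
      exact hf' y hy.le
  have := hmono (Set.self_mem_Ici) hx hx
  rwa [h0] at this

lemma exp_neg_le_quad {x : ℝ} (hx : 0 ≤ x) : Real.exp (-x) ≤ 1 - x + x^2/2 := by
  have := aux_nonneg (f := fun x => 1 - x + x^2/2 - Real.exp (-x))
    (f' := fun x => -1 + x + Real.exp (-x)) ?_ (by norm_num) ?_ x hx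
  · linarith
  · intro y
    have h1 : HasDerivAt (fun y : ℝ => Real.exp (-y)) (-Real.exp (-y)) y := by
      simpa [Function.comp_def] using (Real.hasDerivAt_exp (-y)).comp y (hasDerivAt_neg y)
    have h2 : HasDerivAt (fun y : ℝ => 1 - y + y^2/2) (-1 + y) y := by
      have : HasDerivAt (fun y : ℝ => 1 - y + y^2/2) (0 - 1 + 2*y^(2-1)/2) y := by
        exact (((hasDerivAt_const y (1:ℝ)).sub (hasDerivAt_id y)).add
          ((hasDerivAt_pow 2 y).div_const 2))
      simpa using this
    simpa [Pi.sub_def] using h2.sub h1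
  · intro y hy
    have := Real.add_one_le_exp (-y)
    show 0 ≤ -1 + y + Real.exp (-y)
    linarith

lemma quad_le_exp {x : ℝ} (hx : 0 ≤ x) : 1 + x + x^2/2 ≤ Real.exp x := by
  have := aux_nonneg (f := fun x => Real.exp x - 1 - x - x^2/2)
    (f' := fun x => Real.exp x - 1 - x) ?_ (by norm_num) ?_ x hx
  · linarith
  · intro y
    have h2 : HasDerivAt (fun y : ℝ => y^2/2) y y := by
      simpa using (hasDerivAt_pow 2 y).div_const 2
    simpa [Pi.sub_def, Pi.sub_apply] using (((Real.hasDerivAt_exp y).sub (hasDerivAt_const y 1)).sub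
      (hasDerivAt_id y)).sub h2
  · intro y hy
    have := Real.add_one_le_exp y
    show 0 ≤ Real.exp y - 1 - y
    linarith

lemma bennett_quad {x : ℝ} (hx : 0 ≤ x) :
    (1 - x/3) * (Real.exp x - 1 - x) ≤ x^2/2 := by
  -- g'' ≥ 0 where g' x = ((x-2)*exp x + x + 2)/3
  have hg' : ∀ y : ℝ, 0 ≤ y → 0 ≤ ((y-2)*Real.exp y + y + 2)/3 := by
    apply aux_nonneg (f' := fun y => ((y-1)*Real.exp y + 1)/3)
    · intro y
      have h1 : HasDerivAt (fun y : ℝ => (y-2)*Real.exp y)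
          (1*Real.exp y + (y-2)*Real.exp y) y :=
        ((hasDerivAt_id y).sub_const 2).mul (Real.hasDerivAt_exp y)
      have := ((h1.add (hasDerivAt_id y)).add_const 2).div_const 3
      exact this.congr_deriv (by ring)
    · norm_num
    · intro y hy
      have h1 : 1 - y ≤ Real.exp (-y) := by linarith [Real.add_one_le_exp (-y)]
      have h2 : (1-y) * Real.exp y ≤ Real.exp (-y) * Real.exp y :=
        mul_le_mul_of_nonneg_right h1 (Real.exp_pos y).le
      rw [← Real.exp_add] at h2
      simp at h2
      nlinarith [Real.exp_pos y]
  have := aux_nonneg (f := fun x => x^2/2 - (1 - x/3) * (Real.exp x - 1 - x))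
    (f' := fun y => ((y-2)*Real.exp y + y + 2)/3) ?_ (by norm_num) hg' x hx
  · linarith
  · intro y
    have h2 : HasDerivAt (fun y : ℝ => y^2/2) y y := by
      simpa using (hasDerivAt_pow 2 y).div_const 2
    have h3 : HasDerivAt (fun y : ℝ => (1 - y/3) * (Real.exp y - 1 - y))
        ((-(1/3)) * (Real.exp y - 1 - y) + (1 - y/3) * (Real.exp y - 1)) y := by
      have ha : HasDerivAt (fun y : ℝ => 1 - y/3) (-(1/3)) y := by
        simpa using ((hasDerivAt_id y).div_const 3).const_sub 1
      have hb : HasDerivAt (fun y : ℝ => Real.exp y - 1 - y) (Real.exp y - 1) y := by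
        simpa [Pi.sub_def] using ((Real.hasDerivAt_exp y).sub_const 1).sub (hasDerivAt_id y)
      exact ha.mul hb
    have := h2.sub h3
    exact this.congr_deriv (by ring)

lemma bernoulli_mgf_bound {p lam : ℝ} (hp0 : 0 < p) (hp1 : p < 1)
    (hl : 0 ≤ lam) (hl3 : lam < 3) :
    p * Real.exp (lam * (p - 1)) + (1 - p) * Real.exp (lam * p)
      ≤ Real.exp (p * (1 - p) * lam^2 / (2 * (1 - lam/3))) := by
  set q : ℝ := 1 - p with hq
  have hq0 : 0 < q := by simp [hq]; linarith
  have hx0 : 0 ≤ lam * p := mul_nonneg hl hp0.le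
  set E : ℝ := Real.exp (lam * p) with hE
  have hE1 : 1 + lam*p + (lam*p)^2/2 ≤ E := quad_le_exp hx0
  -- step 1: exp(lam*(p-1)) = exp(-(lam*q)) ≤ 1 - lam*q + (lam*q)^2/2
  have h1 : Real.exp (lam * (p-1)) ≤ 1 - lam*q + (lam*q)^2/2 := by
    have : lam * (p-1) = -(lam*q) := by rw [hq]; ring
    rw [this]
    exact exp_neg_le_quad (mul_nonneg hl hq0.le)
  -- step 2: LHS ≤ 1 + (q/p)*(E - 1 - lam*p)
  have h2 : p * (1 - lam*q + (lam*q)^2/2) + q * E ≤ 1 + (q/p) * (E - 1 - lam*p) := by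
    have key : p * (1 + (q/p) * (E - 1 - lam*p)) - p * (p * (1 - lam*q + (lam*q)^2/2) + q * E)
        = q^2 * (E - (1 + lam*p + (lam*p)^2/2)) := by
      field_simp
      ring
    nlinarith [sq_nonneg q, mul_nonneg (sq_nonneg q) (sub_nonneg.mpr hE1)]
  -- step 3: 1 + y ≤ exp y
  have h3 : 1 + (q/p) * (E - 1 - lam*p) ≤ Real.exp ((q/p) * (E - 1 - lam*p)) := by
    linarith [Real.add_one_le_exp ((q/p) * (E - 1 - lam*p))]
  -- step 4: (q/p)*(E-1-lam p) ≤ p*q*lam²/(2*(1-lam/3))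
  have h4 : (q/p) * (E - 1 - lam*p) ≤ p * q * lam^2 / (2 * (1 - lam/3)) := by
    have hb := bennett_quad hx0
    have hEnn : 0 ≤ E - 1 - lam*p := by nlinarith [sq_nonneg (lam*p)]
    have hd3 : 0 < 1 - lam/3 := by linarith
    have hxl : lam * p ≤ lam := by nlinarith
    have h5 : (1 - lam/3) * (E - 1 - lam*p) ≤ (lam*p)^2/2 := by
      have : (1 - lam/3) * (E - 1 - lam*p) ≤ (1 - lam*p/3) * (E - 1 - lam*p) := by
        apply mul_le_mul_of_nonneg_right _ hEnn
        linarith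
      exact this.trans hb
    have heq : q / p * (E - 1 - lam*p) = q * (E - 1 - lam*p) / p := by ring
    rw [heq, div_le_div_iff₀ hp0 (by linarith : (0:ℝ) < 2 * (1 - lam/3))]
    nlinarith [mul_le_mul_of_nonneg_left h5 (by positivity : (0:ℝ) ≤ 2*q)]
  calc p * Real.exp (lam * (p-1)) + (1-p) * E
      ≤ p * (1 - lam*q + (lam*q)^2/2) + q * E := by
        have := mul_le_mul_of_nonneg_left h1 hp0.le
        rw [hq]; linarith
    _ ≤ 1 + (q/p) * (E - 1 - lam*p) := h2
    _ ≤ Real.exp ((q/p) * (E - 1 - lam*p)) := h3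
    _ ≤ Real.exp (p * q * lam^2 / (2 * (1 - lam/3))) := Real.exp_le_exp.mpr h4
  
lemma lambda_choice {v L : ℝ} (hv : 0 < v) (hL : 0 < L) :
    ∃ lam : ℝ, 0 ≤ lam ∧ lam < 3 ∧
      lam * (Real.sqrt (2*v*L) + L/3) - v*lam^2/(2*(1-lam/3)) = L := by
  set a : ℝ := Real.sqrt (2*L/v) with ha
  have ha0 : 0 < a := Real.sqrt_pos.mpr (by positivity)
  have ha2 : v * a^2 = 2*L := by
    rw [ha, Real.sq_sqrt (by positivity : (0:ℝ) ≤ 2*L/v)]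
    field_simp
  have hsq : Real.sqrt (2*v*L) = a * v := by
    rw [show 2*v*L = (2*L/v) * v^2 by field_simp, Real.sqrt_mul (by positivity) (v^2),
      Real.sqrt_sq hv.le]
  refine ⟨3*a/(3+a), by positivity, ?_, ?_⟩
  · rw [div_lt_iff₀ (by linarith)]; linarith
  · have h3a : (3:ℝ) + a ≠ 0 := by linarith
    have hden : 1 - (3*a/(3+a))/3 = 3/(3+a) := by field_simp; ring
    rw [hsq, hden]
    field_simp
    nlinarith [ha2]

/-- lower confidence bound for the empirical quantile.  If `Y 0,…,Y (t-1)`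
are i.i.d. with `Pr(Y ≤ G_p) = p` where `G_p` is the `p`-quantile, and
`u_t = √(2p(1-p)ln(1/δ)/t) + ln(1/δ)/(3t)` with `p - u_t > 0`, then with probability at
least `1-δ` we have `q̂_t(p - u_t) ≤ G_p`. -/
theorem empirical_quantile_lower_confidence
    {Ω : Type*} [MeasurableSpace Ω] (μ : Measure Ω) [IsProbabilityMeasure μ]
    (t : ℕ) (ht : 1 ≤ t)
    (Y : ℕ → Ω → ℝ) (hmeas : ∀ s < t, Measurable (Y s))
    (hiid : iIndepFun (fun s : Fin t => Y s) μ)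
    (hident : ∀ s < t, Measure.map (Y s) μ = Measure.map (Y 0) μ)
    (p : ℝ) (hp : p ∈ Set.Ioo (0 : ℝ) 1)
    (Gp : ℝ) (hGp : Gp = sInf {x : ℝ | p ≤ (μ {ω | Y 0 ω ≤ x}).toReal})
    (hnoatom : (μ {ω | Y 0 ω ≤ Gp}).toReal = p)
    (δ : ℝ) (hδ : δ ∈ Set.Ioo (0 : ℝ) 1)
    (u : ℝ)
    (hu : u = Real.sqrt (2 * p * (1 - p) * Real.log (1 / δ) / t)
      + Real.log (1 / δ) / (3 * t))
    (hpos : 0 < p - u) :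
    ENNReal.ofReal (1 - δ) ≤ μ {ω | empQuantile t (fun s => Y s ω) (p - u) ≤ Gp} := by
  classical
  obtain ⟨hp0, hp1⟩ := hp
  obtain ⟨hδ0, hδ1⟩ := hδ
  have ht0 : (0:ℝ) < t := by exact_mod_cast Nat.lt_of_lt_of_le Nat.zero_lt_one ht
  set L : ℝ := Real.log (1/δ) with hLdef
  have hL0 : 0 < L := Real.log_pos (by rw [lt_div_iff₀ hδ0]; linarith)
  set q : ℝ := 1 - p with hqdef
  have hq0 : 0 < q := by rw [hqdef]; linarith
  have hmeas0 : Measurable (Y 0) := hmeas 0 (Nat.lt_of_lt_of_le Nat.zero_lt_one ht)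
  have hA : ∀ s, s < t → MeasurableSet {ω | Y s ω ≤ Gp} :=
    fun s hs => measurableSet_le (hmeas s hs) measurable_const
  have hprob : ∀ s, s < t → (μ {ω | Y s ω ≤ Gp}).toReal = p := by
    intro s hs
    have h1 : {ω | Y s ω ≤ Gp} = Y s ⁻¹' (Set.Iic Gp) := rfl
    rw [h1, ← Measure.map_apply (hmeas s hs) measurableSet_Iic, hident s hs,
      Measure.map_apply hmeas0 measurableSet_Iic]
    exact hnoatom
  -- the indicator variables
  set X : ℕ → Ω → ℝ := fun s ω => if Y s ω ≤ Gp then 1 else 0 with hXdef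
  set Zf : Fin t → Ω → ℝ := fun i ω => p - X i ω with hZdef
  have hZmeas : ∀ i : Fin t, Measurable (Zf i) := by
    intro i
    exact measurable_const.sub
      (Measurable.ite (hA i i.isLt) measurable_const measurable_const)
  set W : Ω → ℝ := ∑ i : Fin t, Zf i with hWdef
  have hWapp : ∀ ω, W ω = ∑ i : Fin t, (p - X i ω) := by
    intro ω; rw [hWdef, Finset.sum_apply]
  have hWmeas : Measurable W := by
    have he : W = fun ω => ∑ i : Fin t, Zf i ω := by
      funext ω; rw [hWdef, Finset.sum_apply]
    rw [he]
    exact Finset.measurable_sum Finset.univ (fun i _ => hZmeas i)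
  have hZbdd : ∀ i : Fin t, ∀ ω, |Zf i ω| ≤ 1 := by
    intro i ω
    rw [hZdef]
    simp only [hXdef]
    by_cases h : Y i ω ≤ Gp <;> simp [h, abs_le] <;> constructor <;> linarith
  -- independence
  have hindep : iIndepFun Zf μ := by
    have hg : Measurable (fun y : ℝ => p - (if y ≤ Gp then (1:ℝ) else 0)) := by
      exact measurable_const.sub
        (Measurable.ite measurableSet_Iic measurable_const measurable_const)
    have h2 := hiid.comp (fun _ : Fin t => fun y : ℝ => p - (if y ≤ Gp then (1:ℝ) else 0))
      (fun _ => hg)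
    exact h2
  -- choose lambda
  obtain ⟨lam, hlam0, hlam3, hlam⟩ :=
    lambda_choice (v := (t:ℝ)*(p*q)) (mul_pos ht0 (mul_pos hp0 hq0)) hL0
  have hd3 : (0:ℝ) < 1 - lam/3 := by linarith
  -- u*t identity
  have hut : u * t = Real.sqrt (2*((t:ℝ)*(p*q))*L) + L/3 := by
    have hnn : (0:ℝ) ≤ 2*p*(1-p)*L/t := by positivity
    have h1 : Real.sqrt (2*p*(1-p)*L/t) * t = Real.sqrt (2*((t:ℝ)*(p*q))*L) := by
      rw [show 2*((t:ℝ)*(p*q))*L = (2*p*(1-p)*L/(t:ℝ)) * (t:ℝ)^2 by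
          rw [hqdef]; field_simp,
        Real.sqrt_mul hnn ((t:ℝ)^2), Real.sqrt_sq ht0.le]
    rw [hu, add_mul, h1]
    congr 1
    field_simp
  -- per-variable mgf
  have hmgf_i : ∀ i : Fin t,
      mgf (Zf i) μ lam = p * Real.exp (lam*(p-1)) + q * Real.exp (lam*p) := by
    intro i
    have hAi := hA i i.isLt
    have hfun : (fun ω => Real.exp (lam * Zf i ω))
        = Set.piecewise {ω | Y (i:ℕ) ω ≤ Gp} (fun _ => Real.exp (lam*(p-1)))
            (fun _ => Real.exp (lam*p)) := by
      funext ω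
      simp only [hZdef, hXdef, Set.piecewise, Set.mem_setOf_eq]
      by_cases h : Y (i:ℕ) ω ≤ Gp
      · simp [h]
      · simp [h]
    rw [mgf, hfun, integral_piecewise hAi
      (integrableOn_const (measure_ne_top μ _))
      (integrableOn_const (measure_ne_top μ _)),
      setIntegral_const, setIntegral_const, smul_eq_mul, smul_eq_mul, measureReal_def, measureReal_def,
      hprob i i.isLt]
    congr 2
    rw [prob_compl_eq_one_sub hAi,
      ENNReal.toReal_sub_of_le prob_le_one ENNReal.one_ne_top, ENNReal.toReal_one,
      hprob i i.isLt]
  -- integrability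
  have hint : ∀ i : Fin t, Integrable (fun ω => Real.exp (lam * Zf i ω)) μ := by
    intro i
    apply Integrable.mono' (integrable_const (Real.exp (|lam|)))
      (((hZmeas i).const_mul lam).exp.aestronglyMeasurable)
    filter_upwards with ω
    rw [Real.norm_eq_abs, Real.abs_exp]
    apply Real.exp_le_exp.mpr
    calc lam * Zf i ω ≤ |lam * Zf i ω| := le_abs_self _
      _ = |lam| * |Zf i ω| := abs_mul _ _
      _ ≤ |lam| * 1 := mul_le_mul_of_nonneg_left (hZbdd i ω) (abs_nonneg lam)
      _ = |lam| := mul_one _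
  have hintW : Integrable (fun ω => Real.exp (lam * W ω)) μ := by
    apply Integrable.mono' (integrable_const (Real.exp (|lam| * t)))
      ((hWmeas.const_mul lam).exp.aestronglyMeasurable)
    filter_upwards with ω
    rw [Real.norm_eq_abs, Real.abs_exp]
    apply Real.exp_le_exp.mpr
    have hWb : |W ω| ≤ t := by
      rw [hWdef, Finset.sum_apply]
      calc |∑ i : Fin t, Zf i ω| ≤ ∑ i : Fin t, |Zf i ω| :=
            Finset.abs_sum_le_sum_abs _ _
        _ ≤ ∑ _i : Fin t, (1:ℝ) := Finset.sum_le_sum (fun i _ => hZbdd i ω)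
        _ = t := by simp
    calc lam * W ω ≤ |lam * W ω| := le_abs_self _
      _ = |lam| * |W ω| := abs_mul _ _
      _ ≤ |lam| * t := mul_le_mul_of_nonneg_left hWb (abs_nonneg lam)
  -- Chernoff bound
  have hcher := measure_ge_le_exp_mul_mgf (μ := μ) (X := W) (u * t) hlam0 hintW
  have hmgfW : mgf W μ lam = (p * Real.exp (lam*(p-1)) + q * Real.exp (lam*p))^t := by
    rw [hWdef, hindep.mgf_sum hZmeas Finset.univ]
    rw [Finset.prod_congr rfl (fun i _ => hmgf_i i), Finset.prod_const,
      Finset.card_univ, Fintype.card_fin]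
  have hbase_nonneg : 0 ≤ p * Real.exp (lam*(p-1)) + q * Real.exp (lam*p) := by positivity
  have hbern := bernoulli_mgf_bound hp0 hp1 hlam0 hlam3
  have hbound : (μ {ω | u*t ≤ W ω}).toReal ≤ δ := by
    have hBpow : (p * Real.exp (lam*(p-1)) + q * Real.exp (lam*p))^t
        ≤ (Real.exp (p * q * lam^2 / (2 * (1 - lam/3))))^t := by
      apply pow_le_pow_left₀ hbase_nonneg
      rw [hqdef]; exact hbern
    calc (μ {ω | u*t ≤ W ω}).toReal
        ≤ Real.exp (-lam * (u*t)) * mgf W μ lam := hcher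
      _ ≤ Real.exp (-lam * (u*t)) * (Real.exp (p * q * lam^2 / (2 * (1 - lam/3))))^t := by
          rw [hmgfW]; exact mul_le_mul_of_nonneg_left hBpow (Real.exp_pos _).le
      _ = Real.exp (-lam * (u*t) + t * (p * q * lam^2 / (2 * (1 - lam/3)))) := by
          rw [← Real.exp_nat_mul, ← Real.exp_add]
      _ = Real.exp (-L) := by
          congr 1
          have h2 : (t:ℝ) * (p * q * lam^2 / (2 * (1 - lam/3)))
              = ((t:ℝ)*(p*q))*lam^2/(2*(1-lam/3)) := by ring
          rw [h2]
          rw [← hut] at hlam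
          linarith
      _ = δ := by
          rw [hLdef, one_div, Real.log_inv, neg_neg, Real.exp_log hδ0]
  -- good-event inclusion
  have hsubset : {ω | u*t ≤ W ω}ᶜ ⊆
      {ω | empQuantile t (fun s => Y s ω) (p - u) ≤ Gp} := by
    intro ω hω
    simp only [Set.mem_compl_iff, Set.mem_setOf_eq, not_le] at hω ⊢
    have hScard : ∀ x : ℝ, (∑ i : Fin t, (if Y (i:ℕ) ω ≤ x then (1:ℝ) else 0))
        = (((Finset.range t).filter fun s => Y s ω ≤ x).card : ℝ) := by
      intro x
      rw [Fin.sum_univ_eq_sum_range (fun s => if Y s ω ≤ x then (1:ℝ) else 0) t]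
      rw [Finset.sum_boole]
    have hWω : W ω = t*p - (((Finset.range t).filter fun s => Y s ω ≤ Gp).card : ℝ) := by
      rw [hWapp, Finset.sum_sub_distrib, Finset.sum_const, Finset.card_univ,
        Fintype.card_fin, hXdef]
      rw [hScard Gp]
      simp [nsmul_eq_mul]
    have hcount : (p-u) * t ≤ (((Finset.range t).filter fun s => Y s ω ≤ Gp).card : ℝ) := by
      rw [hWω] at hω
      nlinarith
    apply csInf_le
    · refine ⟨(Finset.range t).inf' ⟨0, Finset.mem_range.mpr
        (Nat.lt_of_lt_of_le Nat.zero_lt_one ht)⟩ (fun s => Y s ω), ?_⟩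
      intro x hx
      simp only [Set.mem_setOf_eq] at hx
      have hpt : 0 < (p-u) * (t:ℝ) := mul_pos hpos ht0
      have hcard : 0 < ((Finset.range t).filter fun s => Y s ω ≤ x).card := by
        by_contra h
        push_neg at h
        have h0 : ((Finset.range t).filter fun s => Y s ω ≤ x).card = 0 := by omega
        rw [h0] at hx
        simp at hx
        linarith
      obtain ⟨s, hs⟩ := Finset.card_pos.mp hcard
      obtain ⟨hs1, hs2⟩ := Finset.mem_filter.mp hs
      exact le_trans (Finset.inf'_le _ hs1) hs2
    · exact hcount
  -- conclude
  have hbadmeas : MeasurableSet {ω | u*t ≤ W ω} := measurableSet_le measurable_const hWmeas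
  have hμbad : μ {ω | u*t ≤ W ω} ≤ ENNReal.ofReal δ := by
    rw [← ENNReal.ofReal_toReal (measure_ne_top μ {ω | u*t ≤ W ω})]
    exact ENNReal.ofReal_le_ofReal hbound
  calc ENNReal.ofReal (1-δ)
      = 1 - ENNReal.ofReal δ := by
        rw [ENNReal.ofReal_sub _ hδ0.le, ENNReal.ofReal_one]
    _ ≤ 1 - μ {ω | u*t ≤ W ω} := tsub_le_tsub_left hμbad 1
    _ = μ ({ω | u*t ≤ W ω}ᶜ) := (prob_compl_eq_one_sub hbadmeas).symm
    _ ≤ _ := measure_mono hsubset
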